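/- (Coleman's theorem.) Let 1 ≤ N ≤ d be integers and let Ψ_N be a unit vector in the antisymmetric subspace Λ^N ℂ^d ⊂ (ℂ^d)^{⊗N}, with ρ_N = |Ψ_N⟩⟨Ψ_N| and one-body reduced density matrix γ_1 = Tr_{2,…,N}[ρ_N]. Then S(γ_1) ≥ log N, with equality for Slater determinants. -/

import Mathlib

namespace Fermionic

open scoped BigOperators

noncomputable section

/-- The antisymmetry condition defining the fermionic subspace `Λ^k ℂ^d` inside
`(ℂ^d)^{⊗ k}`, the latter being realized as the space of functions `(Fin k → Fin d) → ℂ`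
(`(ℂ^d)^{⊗ k} ≅ ℂ^{d^k}`). -/
def IsAntisym (d k : ℕ) (ψ : (Fin k → Fin d) → ℂ) : Prop :=
  ∀ σ : Equiv.Perm (Fin k), ∀ x : Fin k → Fin d,
    ψ (x ∘ σ) = ((Equiv.Perm.sign σ : ℤ) : ℂ) * ψ x

/-- The symmetry condition defining the bosonic subspace `Sym^k ℂ^d` inside `(ℂ^d)^{⊗ k}`. -/
def IsSym (d k : ℕ) (ψ : (Fin k → Fin d) → ℂ) : Prop :=
  ∀ σ : Equiv.Perm (Fin k), ∀ x : Fin k → Fin d, ψ (x ∘ σ) = ψ x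

/-- The rank-one density matrix `|ψ⟩⟨ψ|` of a pure state `ψ`. -/
def pureState {ι : Type} (ψ : ι → ℂ) : Matrix ι ι ℂ :=
  fun x y => ψ x * star (ψ y)

/-- Concatenation of a `k`-tuple of indices with an `(N-k)`-tuple of indices. -/
def combine {d N k : ℕ} (a : Fin k → Fin d) (z : Fin (N - k) → Fin d) : Fin N → Fin d :=
  fun i => if h : (i : ℕ) < k then a ⟨i, h⟩ else z ⟨(i : ℕ) - k, by have := i.isLt; omega⟩

/-- Partial trace `Tr_{k+1,…,N}` over the last `N - k` tensor factors, taking an operator on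
`(ℂ^d)^{⊗ N}` to an operator on `(ℂ^d)^{⊗ k}`. -/
def ptrace {d N : ℕ} (k : ℕ) (ρ : Matrix (Fin N → Fin d) (Fin N → Fin d) ℂ) :
    Matrix (Fin k → Fin d) (Fin k → Fin d) ℂ :=
  fun a b => ∑ z : Fin (N - k) → Fin d, ρ (combine a z) (combine b z)

open Classical in
/-- Von Neumann entropy `S(ρ) = -Tr[ρ log ρ] = -∑ᵢ λᵢ log λᵢ` (natural logarithm),
defined via the eigenvalues of a Hermitian matrix (junk value `0` otherwise). -/
def entropy {ι : Type} [Fintype ι] [DecidableEq ι] (ρ : Matrix ι ι ℂ) : ℝ :=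
  if h : ρ.IsHermitian then -∑ i, h.eigenvalues i * Real.log (h.eigenvalues i) else 0

open Classical in
/-- Matrix logarithm of a Hermitian matrix, via the spectral decomposition (with the
convention `log 0 = 0` on the kernel; junk value `0` for non-Hermitian input). -/
def mlog {ι : Type} [Fintype ι] [DecidableEq ι] (ρ : Matrix ι ι ℂ) : Matrix ι ι ℂ :=
  if h : ρ.IsHermitian then
    (h.eigenvectorUnitary : Matrix ι ι ℂ) *
      Matrix.diagonal (fun i => (Real.log (h.eigenvalues i) : ℂ)) *
      star (h.eigenvectorUnitary : Matrix ι ι ℂ)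
  else 0

open Classical in
/-- Quantum relative entropy `D(ρ‖σ) = Tr[ρ (log ρ - log σ)]` if `ker σ ⊆ ker ρ`,
and `+∞` otherwise. -/
def relEntropy {ι : Type} [Fintype ι] [DecidableEq ι] (ρ σ : Matrix ι ι ℂ) : EReal :=
  if ∀ v : ι → ℂ, σ.mulVec v = 0 → ρ.mulVec v = 0 then
    (((ρ * (mlog ρ - mlog σ)).trace).re : EReal)
  else ⊤

/-- `P` is the orthogonal projector of `(ℂ^d)^{⊗ k}` onto the antisymmetric subspace
`Λ^k ℂ^d`: it is Hermitian, idempotent, and its fixed points are exactly the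
antisymmetric vectors. -/
def IsAntisymProj (d k : ℕ) (P : Matrix (Fin k → Fin d) (Fin k → Fin d) ℂ) : Prop :=
  P.IsHermitian ∧ P * P = P ∧
    ∀ ψ : (Fin k → Fin d) → ℂ, P.mulVec ψ = ψ ↔ IsAntisym d k ψ

/-- The operator `P ⊗ I` on `(ℂ^d)^{⊗ N} = (ℂ^d)^{⊗ k} ⊗ (ℂ^d)^{⊗ (N-k)}`,
for `P` an operator on the first `k` factors. -/
def tensorId {d N k : ℕ} (hk : k ≤ N) (P : Matrix (Fin k → Fin d) (Fin k → Fin d) ℂ) :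
    Matrix (Fin N → Fin d) (Fin N → Fin d) ℂ :=
  fun x y =>
    P (fun i => x (Fin.castLE hk i)) (fun i => y (Fin.castLE hk i)) *
      (if (fun i : Fin (N - k) => x ⟨k + i, by have := i.isLt; omega⟩) =
          (fun i : Fin (N - k) => y ⟨k + i, by have := i.isLt; omega⟩) then 1 else 0)

/-- The tensor product `A ⊗ B` of an operator `A` on `ℂ^d` with an operator `B` on
`(ℂ^d)^{⊗ k}`, as an operator on `(ℂ^d)^{⊗ (k+1)} = ℂ^d ⊗ (ℂ^d)^{⊗ k}`. -/
def kron1 {d k : ℕ} (A : Matrix (Fin 1 → Fin d) (Fin 1 → Fin d) ℂ)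
    (B : Matrix (Fin k → Fin d) (Fin k → Fin d) ℂ) :
    Matrix (Fin (k + 1) → Fin d) (Fin (k + 1) → Fin d) ℂ :=
  fun x y => A (fun _ => x 0) (fun _ => y 0) * B (Fin.tail x) (Fin.tail y)

/-- The normalized Slater determinant `φ_1 ∧ ⋯ ∧ φ_N` built from the vectors
`φ_1, …, φ_N ∈ ℂ^d`, as an element of `(ℂ^d)^{⊗ N}`. -/
def slater (d N : ℕ) (φ : Fin N → EuclideanSpace ℂ (Fin d)) : (Fin N → Fin d) → ℂ :=
  fun x => ((Real.sqrt N.factorial : ℝ) : ℂ)⁻¹ *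
    ∑ σ : Equiv.Perm (Fin N), ((Equiv.Perm.sign σ : ℤ) : ℂ) * ∏ i, φ (σ i) (x i)

namespace Coleman

variable {d M : ℕ}

/-- The operator `|f⟩⟨f|` applied at slot `j`. -/
def Pj (f : Fin d → ℂ) (j : Fin (M + 1)) (ψ : (Fin (M + 1) → Fin d) → ℂ) :
    (Fin (M + 1) → Fin d) → ℂ :=
  fun x => f (x j) * ∑ a, (starRingEnd ℂ) (f a) * ψ (Function.update x j a)

/-- Plain ℓ² inner product of wavefunctions. -/
def ip (ψ χ : (Fin (M + 1) → Fin d) → ℂ) : ℂ := ∑ x, (starRingEnd ℂ) (ψ x) * χ x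

/-- The slot-update reindexing equivalence. -/
def updEquiv (j : Fin (M + 1)) :
    ((Fin (M + 1) → Fin d) × Fin d) ≃ ((Fin (M + 1) → Fin d) × Fin d) where
  toFun p := (Function.update p.1 j p.2, p.1 j)
  invFun p := (Function.update p.1 j p.2, p.1 j)
  left_inv p := by
    simp [Function.update_idem, Function.update_self, Function.update_eq_self]
  right_inv p := by
    simp [Function.update_idem, Function.update_self, Function.update_eq_self]

lemma sum_update (j : Fin (M + 1)) (G : (Fin (M + 1) → Fin d) → Fin d → ℂ) :
    ∑ x : Fin (M + 1) → Fin d, ∑ a : Fin d, G (Function.update x j a) (x j)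
      = ∑ x : Fin (M + 1) → Fin d, ∑ a : Fin d, G x a := by
  have h := Equiv.sum_comp (updEquiv j) (fun p => G p.1 p.2)
  simpa [Fintype.sum_prod_type, updEquiv] using h

lemma ip_adjoint (f : Fin d → ℂ) (j : Fin (M + 1)) (φ χ : (Fin (M + 1) → Fin d) → ℂ) :
    ip (Pj f j φ) χ = ip φ (Pj f j χ) := by
  unfold ip Pj
  have lhs : ∑ x, (starRingEnd ℂ) (f (x j) * ∑ a, (starRingEnd ℂ) (f a) *
      φ (Function.update x j a)) * χ x
      = ∑ x : Fin (M + 1) → Fin d, ∑ a : Fin d,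
        (starRingEnd ℂ) (f (x j)) * (f a * (starRingEnd ℂ) (φ (Function.update x j a)) * χ x) := by
    refine Finset.sum_congr rfl fun x _ => ?_
    simp only [map_mul, map_sum, Finset.sum_mul, Finset.mul_sum]
    refine Finset.sum_congr rfl fun a _ => ?_
    simp only [map_mul, Complex.conj_conj]
    ring
  rw [lhs]
  rw [show (∑ x : Fin (M + 1) → Fin d, ∑ a : Fin d,
      (starRingEnd ℂ) (f (x j)) * (f a * (starRingEnd ℂ) (φ (Function.update x j a)) * χ x))
    = ∑ x : Fin (M + 1) → Fin d, ∑ a : Fin d,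
      (starRingEnd ℂ) (f ((Function.update x j a) j)) *
        (f (x j) * (starRingEnd ℂ) (φ (Function.update (Function.update x j a) j (x j))) *
          χ (Function.update x j a)) from
    (sum_update j (fun x a => (starRingEnd ℂ) (f (x j)) *
      (f a * (starRingEnd ℂ) (φ (Function.update x j a)) * χ x))).symm]
  refine Finset.sum_congr rfl fun x _ => ?_
  simp only [Function.update_self, Function.update_idem, Function.update_eq_self,
    Finset.mul_sum]
  refine Finset.sum_congr rfl fun a _ => ?_
  ring

lemma Pj_idem (f : Fin d → ℂ) (hf : ∑ a, (starRingEnd ℂ) (f a) * f a = 1)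
    (j : Fin (M + 1)) (ψ : (Fin (M + 1) → Fin d) → ℂ) :
    Pj f j (Pj f j ψ) = Pj f j ψ := by
  funext x
  unfold Pj
  have key : ∀ a : Fin d,
      (starRingEnd ℂ) (f a) * (f ((Function.update x j a) j) *
        ∑ b, (starRingEnd ℂ) (f b) * ψ (Function.update (Function.update x j a) j b))
      = ((starRingEnd ℂ) (f a) * f a) *
        ∑ b, (starRingEnd ℂ) (f b) * ψ (Function.update x j b) := by
    intro a
    simp only [Function.update_self, Function.update_idem]
    ring
  rw [Finset.sum_congr rfl fun a _ => key a, ← Finset.sum_mul, hf, one_mul]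

lemma Pj_Pk_zero (f : Fin d → ℂ) {j k : Fin (M + 1)} (hjk : j ≠ k)
    {ψ : (Fin (M + 1) → Fin d) → ℂ} (hanti : IsAntisym d (M + 1) ψ) :
    Pj f j (Pj f k ψ) = 0 := by
  funext x
  show Pj f j (Pj f k ψ) x = 0
  unfold Pj
  have hupd : ∀ a : Fin d, (Function.update x j a) k = x k :=
    fun a => Function.update_of_ne (Ne.symm hjk) a x
  have hswap : ∀ a b : Fin d, ψ (Function.update (Function.update x j b) k a)
      = - ψ (Function.update (Function.update x j a) k b) := by
    intro a b
    have h := hanti (Equiv.swap j k) (Function.update (Function.update x j a) k b)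
    rw [Equiv.Perm.sign_swap hjk] at h
    have hcomp : (Function.update (Function.update x j a) k b) ∘ (Equiv.swap j k)
        = Function.update (Function.update x j b) k a := by
      funext i
      rcases eq_or_ne i j with rfl | hij
      · show (Function.update (Function.update x i a) k b) (Equiv.swap i k i) = _
        rw [Equiv.swap_apply_left, Function.update_self,
          Function.update_of_ne hjk, Function.update_self]
      · rcases eq_or_ne i k with rfl | hik
        · show (Function.update (Function.update x j a) i b) (Equiv.swap j i i) = _
          rw [Equiv.swap_apply_right, Function.update_of_ne hjk, Function.update_self,
            Function.update_self]
        · show (Function.update (Function.update x j a) k b) (Equiv.swap j k i) = _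
          rw [Equiv.swap_apply_of_ne_of_ne hij hik, Function.update_of_ne hik,
            Function.update_of_ne hij, Function.update_of_ne hik, Function.update_of_ne hij]
    rw [hcomp] at h
    rw [h]; push_cast; ring
  set F : Fin d → Fin d → ℂ := fun a b => (starRingEnd ℂ) (f a) * (starRingEnd ℂ) (f b) *
    ψ (Function.update (Function.update x j a) k b) with hF
  have hS : (∑ a : Fin d, ∑ b : Fin d, F a b) = 0 := by
    have h1 : (∑ a : Fin d, ∑ b : Fin d, F a b) = ∑ b : Fin d, ∑ a : Fin d, F a b :=
      Finset.sum_comm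
    have h2 : (∑ b : Fin d, ∑ a : Fin d, F a b) = - ∑ a : Fin d, ∑ b : Fin d, F a b := by
      rw [← Finset.sum_neg_distrib]
      refine Finset.sum_congr rfl fun b _ => ?_
      rw [← Finset.sum_neg_distrib]
      refine Finset.sum_congr rfl fun a _ => ?_
      simp only [hF]
      rw [hswap]
      ring
    linear_combination (h1.trans h2) / 2
  simp only [hupd]
  have expand : (∑ a : Fin d, (starRingEnd ℂ) (f a) * (f (x k) *
        ∑ b : Fin d, (starRingEnd ℂ) (f b) *
          ψ (Function.update (Function.update x j a) k b)))
      = f (x k) * ∑ a : Fin d, ∑ b : Fin d, F a b := by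
    simp only [Finset.mul_sum]
    exact Finset.sum_congr rfl fun a _ => Finset.sum_congr rfl fun b _ => by
      simp only [hF]; ring
  rw [expand, hS, mul_zero, mul_zero]

def swapEquiv (j k : Fin (M + 1)) : (Fin (M + 1) → Fin d) ≃ (Fin (M + 1) → Fin d) where
  toFun x := x ∘ (Equiv.swap j k)
  invFun x := x ∘ (Equiv.swap j k)
  left_inv x := by funext i; simp [Function.comp_apply]
  right_inv x := by funext i; simp [Function.comp_apply]

lemma ip_Pj_swap (f : Fin d → ℂ) (j k : Fin (M + 1))
    {ψ : (Fin (M + 1) → Fin d) → ℂ} (hanti : IsAntisym d (M + 1) ψ) :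
    ip ψ (Pj f j ψ) = ip ψ (Pj f k ψ) := by
  rcases eq_or_ne j k with rfl | hjk
  · rfl
  have hsign : ∀ y : Fin (M + 1) → Fin d, ψ (y ∘ (Equiv.swap j k)) = - ψ y := by
    intro y
    have h := hanti (Equiv.swap j k) y
    rw [Equiv.Perm.sign_swap hjk] at h
    rw [h]; push_cast; ring
  unfold ip Pj
  rw [← Equiv.sum_comp (swapEquiv (d := d) j k) (fun x => (starRingEnd ℂ) (ψ x) *
    (f (x j) * ∑ a, (starRingEnd ℂ) (f a) * ψ (Function.update x j a)))]
  refine Finset.sum_congr rfl fun x _ => ?_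
  show (starRingEnd ℂ) (ψ (x ∘ Equiv.swap j k)) * (f ((x ∘ Equiv.swap j k) j) *
      ∑ a, (starRingEnd ℂ) (f a) * ψ (Function.update (x ∘ Equiv.swap j k) j a)) = _
  have h1 : (x ∘ (Equiv.swap j k)) j = x k := by
    show x (Equiv.swap j k j) = x k
    rw [Equiv.swap_apply_left]
  have h2 : ∀ a : Fin d, Function.update (x ∘ Equiv.swap j k) j a
      = (Function.update x k a) ∘ (Equiv.swap j k) := by
    intro a; funext i
    rcases eq_or_ne i j with rfl | hij
    · show _ = (Function.update x k a) (Equiv.swap i k i)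
      rw [Function.update_self, Equiv.swap_apply_left, Function.update_self]
    · have hsik : Equiv.swap j k i ≠ k := by
        intro hc
        exact hij ((Equiv.swap j k).injective (hc.trans (Equiv.swap_apply_left j k).symm))
      show Function.update (x ∘ Equiv.swap j k) j a i = (Function.update x k a) (Equiv.swap j k i)
      rw [Function.update_of_ne hij, Function.update_of_ne hsik]
      rfl
  have h3 : (∑ a, (starRingEnd ℂ) (f a) * ψ (Function.update (x ∘ Equiv.swap j k) j a))
      = - ∑ a, (starRingEnd ℂ) (f a) * ψ (Function.update x k a) := by
    rw [← Finset.sum_neg_distrib]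
    refine Finset.sum_congr rfl fun a _ => ?_
    rw [h2 a, hsign (Function.update x k a)]; ring
  rw [h1, hsign x, h3, map_neg]; ring

lemma ip_self (χ : (Fin (M + 1) → Fin d) → ℂ) :
    ip χ χ = ((∑ x, Complex.normSq (χ x) : ℝ) : ℂ) := by
  unfold ip
  push_cast
  exact Finset.sum_congr rfl fun x _ => (Complex.normSq_eq_conj_mul_self).symm

lemma ip_eq_inner (ψ χ : (Fin (M + 1) → Fin d) → ℂ) :
    ip ψ χ = @inner ℂ (EuclideanSpace ℂ (Fin (M + 1) → Fin d)) _ (WithLp.toLp 2 ψ) (WithLp.toLp 2 χ) := by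
  rw [PiLp.inner_apply]
  exact Finset.sum_congr rfl fun x _ => by rw [RCLike.inner_apply]; exact mul_comm _ _

lemma ip_sum_right (ψ : (Fin (M + 1) → Fin d) → ℂ)
    (v : Fin (M + 1) → (Fin (M + 1) → Fin d) → ℂ) :
    ip ψ (fun x => ∑ j, v j x) = ∑ j, ip ψ (v j) := by
  unfold ip
  simp only [Finset.mul_sum]
  exact Finset.sum_comm

lemma ip_sum_sum (u v : Fin (M + 1) → (Fin (M + 1) → Fin d) → ℂ) :
    ip (fun x => ∑ j, u j x) (fun x => ∑ k, v k x) = ∑ j, ∑ k, ip (u j) (v k) := by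
  unfold ip
  have h1 : ∀ x : Fin (M + 1) → Fin d,
      (starRingEnd ℂ) (∑ j, u j x) * (∑ k, v k x)
        = ∑ j, ∑ k, (starRingEnd ℂ) (u j x) * v k x := by
    intro x
    rw [map_sum, Finset.sum_mul]
    exact Finset.sum_congr rfl fun j _ => Finset.mul_sum _ _ _
  rw [Finset.sum_congr rfl fun x _ => h1 x, Finset.sum_comm]
  exact Finset.sum_congr rfl fun j _ => Finset.sum_comm

lemma ip_zero (ψ : (Fin (M + 1) → Fin d) → ℂ) : ip ψ 0 = 0 := by
  unfold ip; simp

lemma ip_P0 (f : Fin d → ℂ) (ψ : (Fin (M + 1) → Fin d) → ℂ) :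
    ip ψ (Pj f 0 ψ) = ((∑ z : Fin M → Fin d,
      Complex.normSq (∑ a, (starRingEnd ℂ) (f a) * ψ (Fin.cons a z)) : ℝ) : ℂ) := by
  unfold ip Pj
  rw [← Equiv.sum_comp (Fin.consEquiv (fun _ : Fin (M + 1) => Fin d))
    (fun x => (starRingEnd ℂ) (ψ x) * (f (x 0) *
      ∑ a, (starRingEnd ℂ) (f a) * ψ (Function.update x 0 a))),
    Fintype.sum_prod_type]
  have h1 : ∀ (b : Fin d) (z : Fin M → Fin d),
      (starRingEnd ℂ) (ψ (Fin.cons b z)) * (f b *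
        ∑ a, (starRingEnd ℂ) (f a) * ψ (Fin.cons a z))
      = ((starRingEnd ℂ) (ψ (Fin.cons b z)) * f b) *
        (∑ a, (starRingEnd ℂ) (f a) * ψ (Fin.cons a z)) := fun b z => by ring
  have h2 : ∀ p : Fin d × (Fin M → Fin d),
      (fun x => (starRingEnd ℂ) (ψ x) * (f (x 0) *
        ∑ a, (starRingEnd ℂ) (f a) * ψ (Function.update x 0 a)))
          ((Fin.consEquiv (fun _ : Fin (M + 1) => Fin d)) p)
      = (starRingEnd ℂ) (ψ (Fin.cons p.1 p.2)) * (f p.1 *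
        ∑ a, (starRingEnd ℂ) (f a) * ψ (Fin.cons a p.2)) := by
    intro p
    obtain ⟨b, z⟩ := p
    have hce : (Fin.consEquiv (fun _ : Fin (M + 1) => Fin d)) (b, z) = Fin.cons b z := rfl
    simp only [hce, Fin.cons_zero]
    refine congrArg _ (congrArg _ (Finset.sum_congr rfl fun a _ => ?_))
    rw [Fin.update_cons_zero]
  refine Eq.trans (Finset.sum_congr rfl fun b _ => Finset.sum_congr rfl fun z _ =>
    (h2 (b, z)).trans (h1 b z)) ?_
  rw [Finset.sum_comm]
  push_cast
  refine Finset.sum_congr rfl fun z _ => ?_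
  rw [← Finset.sum_mul, Complex.normSq_eq_conj_mul_self]
  congr 1
  rw [map_sum]
  refine Finset.sum_congr rfl fun b _ => ?_
  rw [map_mul, Complex.conj_conj]
  ring

lemma quadform_bound {ψ : (Fin (M + 1) → Fin d) → ℂ} (hanti : IsAntisym d (M + 1) ψ)
    (hψ : ∑ x, Complex.normSq (ψ x) = 1) (f : Fin d → ℂ)
    (hf : ∑ a, Complex.normSq (f a) = 1) :
    ((M : ℝ) + 1) * (∑ z : Fin M → Fin d,
      Complex.normSq (∑ a, (starRingEnd ℂ) (f a) * ψ (Fin.cons a z))) ≤ 1 := by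
  have hfC : ∑ a, (starRingEnd ℂ) (f a) * f a = 1 := by
    have h := fun a : Fin d => (Complex.normSq_eq_conj_mul_self (z := f a))
    rw [Finset.sum_congr rfl fun a _ => (h a).symm, ← Complex.ofReal_sum, hf,
      Complex.ofReal_one]
  set r : ℝ := ∑ z : Fin M → Fin d,
    Complex.normSq (∑ a, (starRingEnd ℂ) (f a) * ψ (Fin.cons a z)) with hr
  have hr0 : 0 ≤ r :=
    Finset.sum_nonneg fun z _ => Complex.normSq_nonneg _
  -- each ⟨ψ, P_j ψ⟩ equals r
  have hPj : ∀ j : Fin (M + 1), ip ψ (Pj f j ψ) = ((r : ℝ) : ℂ) := fun j =>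
    (ip_Pj_swap f j 0 hanti).trans (ip_P0 f ψ)
  -- ⟨ψ, Φ⟩ where Φ = ∑_j P_j ψ
  set Φ : (Fin (M + 1) → Fin d) → ℂ := fun x => ∑ j, Pj f j ψ x with hΦ
  have hipψΦ : ip ψ Φ = ((((M : ℝ) + 1) * r : ℝ) : ℂ) := by
    rw [hΦ, ip_sum_right, Finset.sum_congr rfl fun j _ => hPj j, Finset.sum_const]
    simp [Finset.card_univ]
  have hipΦΦ : ip Φ Φ = ((((M : ℝ) + 1) * r : ℝ) : ℂ) := by
    rw [hΦ, ip_sum_sum]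
    have hdiag : ∀ j : Fin (M + 1), (∑ k, ip (Pj f j ψ) (Pj f k ψ)) = ((r : ℝ) : ℂ) := by
      intro j
      rw [Finset.sum_eq_single j]
      · rw [ip_adjoint, Pj_idem f hfC, hPj j]
      · intro k _ hkj
        rw [ip_adjoint, Pj_Pk_zero f (Ne.symm hkj) hanti, ip_zero]
      · intro h; exact absurd (Finset.mem_univ j) h
    rw [Finset.sum_congr rfl fun j _ => hdiag j, Finset.sum_const]
    simp [Finset.card_univ]
  -- Cauchy–Schwarz
  have hψψ : ip ψ ψ = ((1 : ℝ) : ℂ) := by rw [ip_self, hψ]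
  have cs := inner_mul_inner_self_le (𝕜 := ℂ)
    (E := EuclideanSpace ℂ (Fin (M + 1) → Fin d)) (WithLp.toLp 2 ψ) (WithLp.toLp 2 Φ)
  rw [← ip_eq_inner, ← ip_eq_inner, ← ip_eq_inner, ← ip_eq_inner] at cs
  have hΦψ : ip Φ ψ = ((((M : ℝ) + 1) * r : ℝ) : ℂ) := by
    have : ip Φ ψ = (starRingEnd ℂ) (ip ψ Φ) := by
      unfold ip
      rw [map_sum]
      exact Finset.sum_congr rfl fun x _ => by rw [map_mul, Complex.conj_conj]; ring
    rw [this, hipψΦ, Complex.conj_ofReal]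
  rw [hipψΦ, hipΦΦ, hΦψ, hψψ] at cs
  have hs0 : 0 ≤ ((M : ℝ) + 1) * r := by positivity
  simp only [Complex.norm_real, Real.norm_eq_abs, RCLike.re_to_complex,
    Complex.ofReal_re, abs_of_nonneg hs0] at cs
  nlinarith [cs, hs0, sq_nonneg (((M : ℝ) + 1) * r - 1)]

lemma combine_eq_cons (a : Fin 1 → Fin d) (z : Fin (M + 1 - 1) → Fin d) :
    combine a z = Fin.cons (a 0) (z : Fin M → Fin d) := by
  funext i
  induction i using Fin.cases with
  | zero =>
    rw [Fin.cons_zero]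
    show (if h : ((0 : Fin (M + 1)) : ℕ) < 1 then a ⟨0, h⟩ else _) = a 0
    rw [dif_pos (by norm_num)]
    exact congrArg a (Subsingleton.elim _ _)
  | succ j =>
    rw [Fin.cons_succ]
    show combine a z j.succ = z j
    unfold combine
    rw [dif_neg (by simp [Fin.val_succ])]
    exact congrArg z (by ext; simp [Fin.val_succ])

lemma gamma_apply (ψ : (Fin (M + 1) → Fin d) → ℂ) (a b : Fin 1 → Fin d) :
    ptrace 1 (pureState ψ) a b
      = ∑ z : Fin M → Fin d, ψ (Fin.cons (a 0) z) * (starRingEnd ℂ) (ψ (Fin.cons (b 0) z)) := by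
  show (∑ z : Fin (M + 1 - 1) → Fin d,
    ψ (combine a z) * star (ψ (combine b z))) = _
  exact Finset.sum_congr rfl fun z _ => by rw [combine_eq_cons, combine_eq_cons]; rfl

lemma gamma_isHermitian (ψ : (Fin (M + 1) → Fin d) → ℂ) :
    (ptrace 1 (pureState ψ)).IsHermitian := by
  refine Matrix.IsHermitian.ext fun a b => ?_
  rw [gamma_apply, gamma_apply, star_sum]
  refine Finset.sum_congr rfl fun z _ => ?_
  simp only [star_mul', Complex.star_def, Complex.conj_conj]
  ring

lemma gamma_trace (ψ : (Fin (M + 1) → Fin d) → ℂ) :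
    (ptrace 1 (pureState ψ)).trace = ((∑ x, Complex.normSq (ψ x) : ℝ) : ℂ) := by
  have hx : ((∑ x, Complex.normSq (ψ x) : ℝ) : ℂ)
      = ∑ x, ψ x * (starRingEnd ℂ) (ψ x) := by
    push_cast
    exact Finset.sum_congr rfl fun x _ => (Complex.mul_conj (ψ x)).symm
  rw [hx]
  unfold Matrix.trace Matrix.diag
  rw [Finset.sum_congr rfl fun a _ => gamma_apply ψ a a,
    ← Equiv.sum_comp (Equiv.funUnique (Fin 1) (Fin d)).symm
      (fun a : Fin 1 → Fin d => ∑ z : Fin M → Fin d,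
        ψ (Fin.cons (a 0) z) * (starRingEnd ℂ) (ψ (Fin.cons (a 0) z))),
    ← Equiv.sum_comp (Fin.consEquiv (fun _ : Fin (M + 1) => Fin d))
      (fun x => ψ x * (starRingEnd ℂ) (ψ x)),
    Fintype.sum_prod_type]
  exact Finset.sum_congr rfl fun w _ => Finset.sum_congr rfl fun z _ => rfl

lemma gamma_quadform (ψ : (Fin (M + 1) → Fin d) → ℂ) (v : (Fin 1 → Fin d) → ℂ) :
    dotProduct (star v) ((ptrace 1 (pureState ψ)).mulVec v)
      = ((∑ z : Fin M → Fin d, Complex.normSq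
          (∑ w : Fin d, (starRingEnd ℂ) (v (fun _ => w)) * ψ (Fin.cons w z)) : ℝ) : ℂ) := by
  set G : (Fin M → Fin d) → ℂ :=
    fun z => ∑ w : Fin d, (starRingEnd ℂ) (v (fun _ => w)) * ψ (Fin.cons w z) with hG
  have hGa : ∀ z, (∑ a : Fin 1 → Fin d, (starRingEnd ℂ) (v a) * ψ (Fin.cons (a 0) z)) = G z := by
    intro z
    rw [hG, ← Equiv.sum_comp (Equiv.funUnique (Fin 1) (Fin d)).symm
      (fun a : Fin 1 → Fin d => (starRingEnd ℂ) (v a) * ψ (Fin.cons (a 0) z))]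
    rfl
  have hGb : ∀ z, (∑ b : Fin 1 → Fin d, (starRingEnd ℂ) (ψ (Fin.cons (b 0) z)) * v b)
      = (starRingEnd ℂ) (G z) := by
    intro z
    rw [← hGa z, map_sum]
    exact Finset.sum_congr rfl fun a _ => by
      rw [map_mul, Complex.conj_conj]; ring
  have step1 : dotProduct (star v) ((ptrace 1 (pureState ψ)).mulVec v)
      = ∑ a : Fin 1 → Fin d, ∑ z : Fin M → Fin d, ∑ b : Fin 1 → Fin d,
        ((starRingEnd ℂ) (v a) * ψ (Fin.cons (a 0) z)) *
          ((starRingEnd ℂ) (ψ (Fin.cons (b 0) z)) * v b) := by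
    simp only [Matrix.mulVec, dotProduct, Pi.star_apply]
    refine Finset.sum_congr rfl fun a _ => ?_
    rw [Finset.mul_sum]
    refine (Finset.sum_congr rfl fun b _ => ?_).trans Finset.sum_comm
    rw [gamma_apply, Finset.sum_mul, Finset.mul_sum]
    refine Finset.sum_congr rfl fun z _ => ?_
    show star (v a) * _ = _
    rw [Complex.star_def]
    ring
  rw [step1, Finset.sum_comm]
  push_cast
  refine Finset.sum_congr rfl fun z _ => ?_
  rw [show (∑ a : Fin 1 → Fin d, ∑ b : Fin 1 → Fin d,
      ((starRingEnd ℂ) (v a) * ψ (Fin.cons (a 0) z)) *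
        ((starRingEnd ℂ) (ψ (Fin.cons (b 0) z)) * v b))
    = (∑ a : Fin 1 → Fin d, (starRingEnd ℂ) (v a) * ψ (Fin.cons (a 0) z)) *
      (∑ b : Fin 1 → Fin d, (starRingEnd ℂ) (ψ (Fin.cons (b 0) z)) * v b) from
    (Finset.sum_mul_sum _ _ _ _).symm]
  rw [hGa z, hGb z, Complex.mul_conj]

lemma trace_eq_sum_eigenvalues {ι : Type} [Fintype ι] [DecidableEq ι]
    {A : Matrix ι ι ℂ} (hA : A.IsHermitian) :
    A.trace = ∑ i, (hA.eigenvalues i : ℂ) := by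
  exact hA.trace_eq_sum_eigenvalues

lemma perm_eq_of_succ_eq {σ τ : Equiv.Perm (Fin (M + 1))}
    (h : ∀ i : Fin M, τ i.succ = σ i.succ) : τ = σ := by
  have h0 : τ 0 = σ 0 := by
    obtain ⟨j, hj⟩ := τ.surjective (σ 0)
    induction j using Fin.cases with
    | zero => exact hj
    | succ i =>
      rw [h i] at hj
      exact absurd (σ.injective hj) (Fin.succ_ne_zero i)
  refine Equiv.ext fun j => ?_
  induction j using Fin.cases with
  | zero => exact h0
  | succ i => exact h i

lemma slater_cons (φ : Fin (M + 1) → EuclideanSpace ℂ (Fin d)) (w : Fin d)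
    (z : Fin M → Fin d) :
    slater d (M + 1) φ (Fin.cons w z)
      = ((Real.sqrt (M + 1).factorial : ℝ) : ℂ)⁻¹ *
        ∑ σ : Equiv.Perm (Fin (M + 1)), ((Equiv.Perm.sign σ : ℤ) : ℂ) *
          (φ (σ 0) w * ∏ i : Fin M, φ (σ i.succ) (z i)) := by
  unfold slater
  congr 1
  refine Finset.sum_congr rfl fun σ _ => ?_
  congr 1
  rw [Fin.prod_univ_succ]
  congr 1

lemma slater_gamma (φ : Fin (M + 1) → EuclideanSpace ℂ (Fin d)) (hφ : Orthonormal ℂ φ)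
    (a b : Fin 1 → Fin d) :
    ptrace 1 (pureState (slater d (M + 1) φ)) a b
      = (((M + 1 : ℕ)) : ℂ)⁻¹ * ∑ k, φ k (a 0) * (starRingEnd ℂ) (φ k (b 0)) := by
  have hortho : ∀ j k : Fin (M + 1),
      (∑ w : Fin d, φ j w * (starRingEnd ℂ) (φ k w)) = if k = j then 1 else 0 := by
    intro j k
    have h := orthonormal_iff_ite.mp hφ k j
    rw [PiLp.inner_apply] at h
    rw [← h]
    exact Finset.sum_congr rfl fun w _ => by rw [RCLike.inner_apply]
  set c : ℂ := ((Real.sqrt (M + 1).factorial : ℝ) : ℂ)⁻¹ with hc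
  have hcconj : (starRingEnd ℂ) c = c := by
    rw [hc, map_inv₀, Complex.conj_ofReal]
  have hcc : c * c = (((M + 1).factorial : ℝ) : ℂ)⁻¹ := by
    rw [hc, ← mul_inv, ← Complex.ofReal_mul,
      Real.mul_self_sqrt (Nat.cast_nonneg _)]
  have hconj : ∀ z : Fin M → Fin d,
      (starRingEnd ℂ) (slater d (M + 1) φ (Fin.cons (b 0) z))
      = c * ∑ τ : Equiv.Perm (Fin (M + 1)), ((Equiv.Perm.sign τ : ℤ) : ℂ) *
          ((starRingEnd ℂ) (φ (τ 0) (b 0)) *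
            ∏ i : Fin M, (starRingEnd ℂ) (φ (τ i.succ) (z i))) := by
    intro z
    rw [slater_cons, map_mul, hcconj, map_sum]
    congr 1
    refine Finset.sum_congr rfl fun τ _ => ?_
    rw [map_mul, map_intCast, map_mul, map_prod]
  -- the inner z-sum
  have key : ∀ σ τ : Equiv.Perm (Fin (M + 1)),
      (∑ z : Fin M → Fin d, (∏ i : Fin M, φ (σ i.succ) (z i)) *
        ∏ i : Fin M, (starRingEnd ℂ) (φ (τ i.succ) (z i)))
      = if τ = σ then 1 else 0 := by
    intro σ τ
    have h1 : ∀ z : Fin M → Fin d, (∏ i : Fin M, φ (σ i.succ) (z i)) *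
        ∏ i : Fin M, (starRingEnd ℂ) (φ (τ i.succ) (z i))
        = ∏ i : Fin M, (φ (σ i.succ) (z i) * (starRingEnd ℂ) (φ (τ i.succ) (z i))) :=
      fun z => (Finset.prod_mul_distrib).symm
    rw [Finset.sum_congr rfl fun z _ => h1 z, ← Fintype.piFinset_univ,
      ← Finset.prod_univ_sum (fun _ : Fin M => (Finset.univ : Finset (Fin d)))
        (fun i v => φ (σ i.succ) v * (starRingEnd ℂ) (φ (τ i.succ) v))]
    rw [Finset.prod_congr rfl fun i _ => hortho (σ i.succ) (τ i.succ), Finset.prod_boole]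
    by_cases h : τ = σ
    · subst h; rw [if_pos (fun i _ => rfl), if_pos rfl]
    · rw [if_neg (fun hall => h (perm_eq_of_succ_eq fun i =>
        hall i (Finset.mem_univ i))), if_neg h]
  rw [gamma_apply]
  have expand : ∀ z : Fin M → Fin d,
      slater d (M + 1) φ (Fin.cons (a 0) z) *
        (starRingEnd ℂ) (slater d (M + 1) φ (Fin.cons (b 0) z))
      = ∑ σ : Equiv.Perm (Fin (M + 1)), ∑ τ : Equiv.Perm (Fin (M + 1)),
          (c * c) * (((Equiv.Perm.sign σ : ℤ) : ℂ) * ((Equiv.Perm.sign τ : ℤ) : ℂ)) *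
            (φ (σ 0) (a 0) * (starRingEnd ℂ) (φ (τ 0) (b 0))) *
            ((∏ i : Fin M, φ (σ i.succ) (z i)) *
              ∏ i : Fin M, (starRingEnd ℂ) (φ (τ i.succ) (z i))) := by
    intro z
    rw [slater_cons, hconj z]
    rw [show ∀ A B : ℂ, (c * A) * (c * B) = (c * c) * (A * B) from fun A B => by ring]
    rw [Finset.sum_mul_sum]
    rw [Finset.mul_sum]
    refine Finset.sum_congr rfl fun σ _ => ?_
    rw [Finset.mul_sum]
    exact Finset.sum_congr rfl fun τ _ => by ring
  rw [Finset.sum_congr rfl fun z _ => expand z, Finset.sum_comm]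
  have swap2 : ∀ σ : Equiv.Perm (Fin (M + 1)),
      (∑ z : Fin M → Fin d, ∑ τ : Equiv.Perm (Fin (M + 1)),
        (c * c) * (((Equiv.Perm.sign σ : ℤ) : ℂ) * ((Equiv.Perm.sign τ : ℤ) : ℂ)) *
          (φ (σ 0) (a 0) * (starRingEnd ℂ) (φ (τ 0) (b 0))) *
          ((∏ i : Fin M, φ (σ i.succ) (z i)) *
            ∏ i : Fin M, (starRingEnd ℂ) (φ (τ i.succ) (z i))))
      = (c * c) * (φ (σ 0) (a 0) * (starRingEnd ℂ) (φ (σ 0) (b 0))) := by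
    intro σ
    rw [Finset.sum_comm]
    have inner : ∀ τ : Equiv.Perm (Fin (M + 1)),
        (∑ z : Fin M → Fin d,
          (c * c) * (((Equiv.Perm.sign σ : ℤ) : ℂ) * ((Equiv.Perm.sign τ : ℤ) : ℂ)) *
            (φ (σ 0) (a 0) * (starRingEnd ℂ) (φ (τ 0) (b 0))) *
            ((∏ i : Fin M, φ (σ i.succ) (z i)) *
              ∏ i : Fin M, (starRingEnd ℂ) (φ (τ i.succ) (z i))))
        = if τ = σ then (c * c) * (((Equiv.Perm.sign σ : ℤ) : ℂ) * ((Equiv.Perm.sign τ : ℤ) : ℂ)) *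
            (φ (σ 0) (a 0) * (starRingEnd ℂ) (φ (τ 0) (b 0))) else 0 := by
      intro τ
      rw [← Finset.mul_sum, key σ τ]
      by_cases h : τ = σ
      · rw [if_pos h, if_pos h, mul_one]
      · rw [if_neg h, if_neg h, mul_zero]
    rw [Finset.sum_congr rfl fun τ _ => inner τ, Finset.sum_ite_eq' Finset.univ σ]
    rw [if_pos (Finset.mem_univ σ)]
    have hsgn : ((Equiv.Perm.sign σ : ℤ) : ℂ) * ((Equiv.Perm.sign σ : ℤ) : ℂ) = 1 := by
      rw [← Int.cast_mul, ← Units.val_mul, Int.units_mul_self]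
      norm_num
    rw [hsgn]
    ring
  rw [Finset.sum_congr rfl fun σ _ => swap2 σ]
  -- now ∑_σ (c*c) * h (σ 0) with h k = φ k (a0) * conj (φ k (b0))
  rw [← Finset.mul_sum]
  rw [← Equiv.sum_comp (Equiv.Perm.decomposeFin).symm
    (fun σ : Equiv.Perm (Fin (M + 1)) => φ (σ 0) (a 0) * (starRingEnd ℂ) (φ (σ 0) (b 0))),
    Fintype.sum_prod_type]
  have hdec : ∀ (p : Fin (M + 1)) (e : Equiv.Perm (Fin M)),
      φ ((Equiv.Perm.decomposeFin.symm (p, e)) 0) (a 0) *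
        (starRingEnd ℂ) (φ ((Equiv.Perm.decomposeFin.symm (p, e)) 0) (b 0))
      = φ p (a 0) * (starRingEnd ℂ) (φ p (b 0)) := by
    intro p e
    rw [Equiv.Perm.decomposeFin_symm_apply_zero]
  rw [Finset.sum_congr rfl fun p _ => Finset.sum_congr rfl fun e _ => hdec p e]
  rw [Finset.sum_congr rfl fun p _ => Finset.sum_const _]
  simp only [Finset.card_univ, Fintype.card_perm, Fintype.card_fin, nsmul_eq_mul]
  rw [← Finset.mul_sum, hcc]
  have hM0 : ((M.factorial : ℕ) : ℂ) ≠ 0 := Nat.cast_ne_zero.mpr (Nat.factorial_pos M).ne'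
  have hfac : ((((M + 1).factorial : ℕ) : ℝ) : ℂ)
      = ((M + 1 : ℕ) : ℂ) * ((M.factorial : ℕ) : ℂ) := by
    push_cast [Nat.factorial_succ]
    ring
  have hcancel : ∀ S : ℂ, ((M.factorial : ℕ) : ℂ)⁻¹ * (((M.factorial : ℕ) : ℂ) * S) = S :=
    fun S => by rw [← mul_assoc, inv_mul_cancel₀ hM0, one_mul]
  rw [hfac, mul_inv, mul_assoc, hcancel]

lemma ortho_sum {n : ℕ} (φ : Fin n → EuclideanSpace ℂ (Fin d)) (hφ : Orthonormal ℂ φ)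
    (j k : Fin n) :
    (∑ w : Fin d, φ j w * (starRingEnd ℂ) (φ k w)) = if k = j then 1 else 0 := by
  have h := orthonormal_iff_ite.mp hφ k j
  rw [PiLp.inner_apply] at h
  rw [← h]
  exact Finset.sum_congr rfl fun w _ => by rw [RCLike.inner_apply]

lemma slater_gamma_sq (φ : Fin (M + 1) → EuclideanSpace ℂ (Fin d)) (hφ : Orthonormal ℂ φ) :
    ptrace 1 (pureState (slater d (M + 1) φ)) * ptrace 1 (pureState (slater d (M + 1) φ))
      = (((M + 1 : ℕ)) : ℂ)⁻¹ • ptrace 1 (pureState (slater d (M + 1) φ)) := by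
  ext a c
  rw [Matrix.mul_apply, Matrix.smul_apply, slater_gamma φ hφ a c]
  rw [Finset.sum_congr rfl fun b _ => by
    rw [slater_gamma φ hφ a b, slater_gamma φ hφ b c]]
  set ν : ℂ := (((M + 1 : ℕ)) : ℂ)⁻¹ with hν
  rw [smul_eq_mul]
  have step : ∀ b : Fin 1 → Fin d,
      (ν * ∑ k, φ k (a 0) * (starRingEnd ℂ) (φ k (b 0))) *
        (ν * ∑ l, φ l (b 0) * (starRingEnd ℂ) (φ l (c 0)))
      = (ν * ν) * ∑ k, ∑ l, (φ k (a 0) * (starRingEnd ℂ) (φ l (c 0))) *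
          ((starRingEnd ℂ) (φ k (b 0)) * φ l (b 0)) := by
    intro b
    rw [show ∀ A B : ℂ, (ν * A) * (ν * B) = ν * ν * (A * B) from fun A B => by ring,
      Finset.sum_mul_sum]
    refine congrArg _ ?_
    exact Finset.sum_congr rfl fun k _ => Finset.sum_congr rfl fun l _ => by ring
  rw [Finset.sum_congr rfl fun b _ => step b, ← Finset.mul_sum]
  have inner : ∀ k, (∑ b : Fin 1 → Fin d, ∑ l,
      (φ k (a 0) * (starRingEnd ℂ) (φ l (c 0))) *
        ((starRingEnd ℂ) (φ k (b 0)) * φ l (b 0)))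
      = φ k (a 0) * (starRingEnd ℂ) (φ k (c 0)) := by
    intro k
    rw [Finset.sum_comm]
    have hl : ∀ l, (∑ b : Fin 1 → Fin d,
        (φ k (a 0) * (starRingEnd ℂ) (φ l (c 0))) *
          ((starRingEnd ℂ) (φ k (b 0)) * φ l (b 0)))
        = if k = l then φ k (a 0) * (starRingEnd ℂ) (φ l (c 0)) else 0 := by
      intro l
      rw [← Finset.mul_sum]
      have hb : (∑ b : Fin 1 → Fin d, (starRingEnd ℂ) (φ k (b 0)) * φ l (b 0))
          = ∑ w : Fin d, φ l w * (starRingEnd ℂ) (φ k w) := by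
        rw [← Equiv.sum_comp (Equiv.funUnique (Fin 1) (Fin d)).symm
          (fun b : Fin 1 → Fin d => (starRingEnd ℂ) (φ k (b 0)) * φ l (b 0))]
        refine Finset.sum_congr rfl fun w _ => ?_
        show (starRingEnd ℂ) (φ k w) * φ l w = _
        ring
      rw [hb, ortho_sum φ hφ l k]
      by_cases h : k = l
      · rw [if_pos h, if_pos h, mul_one]
      · rw [if_neg h, if_neg h, mul_zero]
    rw [Finset.sum_congr rfl fun l _ => hl l,
      Finset.sum_ite_eq Finset.univ k (fun l => φ k (a 0) * (starRingEnd ℂ) (φ l (c 0))),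
      if_pos (Finset.mem_univ k)]
  refine (congrArg (ν * ν * ·) ?_).trans (mul_assoc ν ν _)
  rw [Finset.sum_comm]
  exact Finset.sum_congr rfl fun k _ => inner k

lemma slater_gamma_trace (φ : Fin (M + 1) → EuclideanSpace ℂ (Fin d))
    (hφ : Orthonormal ℂ φ) :
    (ptrace 1 (pureState (slater d (M + 1) φ))).trace = 1 := by
  have hMne : ((M + 1 : ℕ) : ℂ) ≠ 0 := Nat.cast_ne_zero.mpr (Nat.succ_ne_zero M)
  unfold Matrix.trace Matrix.diag
  rw [Finset.sum_congr rfl fun a _ => slater_gamma φ hφ a a, ← Finset.mul_sum]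
  have hsum : (∑ a : Fin 1 → Fin d, ∑ k, φ k (a 0) * (starRingEnd ℂ) (φ k (a 0)))
      = ((M + 1 : ℕ) : ℂ) := by
    rw [Finset.sum_comm]
    have hk : ∀ k, (∑ a : Fin 1 → Fin d, φ k (a 0) * (starRingEnd ℂ) (φ k (a 0))) = 1 := by
      intro k
      rw [← Equiv.sum_comp (Equiv.funUnique (Fin 1) (Fin d)).symm
        (fun a : Fin 1 → Fin d => φ k (a 0) * (starRingEnd ℂ) (φ k (a 0)))]
      have h := ortho_sum φ hφ k k
      rw [if_pos rfl] at h
      exact h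
    rw [Finset.sum_congr rfl fun k _ => hk k, Finset.sum_const, Finset.card_univ,
      Fintype.card_fin, nsmul_eq_mul, mul_one]
  rw [hsum, inv_mul_cancel₀ hMne]

lemma eigs_dichotomy {ι : Type} [Fintype ι] [DecidableEq ι] {A : Matrix ι ι ℂ}
    (hA : A.IsHermitian) {ν : ℂ} (hsq : A * A = ν • A) (i : ι) :
    ((hA.eigenvalues i : ℝ) : ℂ) = 0 ∨ ((hA.eigenvalues i : ℝ) : ℂ) = ν := by
  have hmv := hA.mulVec_eigenvectorBasis i
  have hAA : (A * A).mulVec ⇑(hA.eigenvectorBasis i)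
      = hA.eigenvalues i • (hA.eigenvalues i • ⇑(hA.eigenvectorBasis i)) := by
    rw [← Matrix.mulVec_mulVec, hmv, Matrix.mulVec_smul, hmv]
  have hB : (A * A).mulVec ⇑(hA.eigenvectorBasis i)
      = ν • (hA.eigenvalues i • ⇑(hA.eigenvectorBasis i)) := by
    rw [hsq, Matrix.smul_mulVec, hmv]
  obtain ⟨a, ha⟩ : ∃ a, (hA.eigenvectorBasis i) a ≠ 0 := by
    by_contra hno
    push_neg at hno
    have h1 := hA.eigenvectorBasis.orthonormal.1 i
    have h0 : hA.eigenvectorBasis i = 0 := by ext a; exact hno a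
    rw [h0, norm_zero] at h1
    norm_num at h1
  have hpt := congrFun (hAA.symm.trans hB) a
  simp only [Pi.smul_apply, Complex.real_smul, smul_eq_mul] at hpt
  rcases eq_or_ne ((hA.eigenvalues i : ℝ) : ℂ) 0 with h0 | h0
  · exact Or.inl h0
  · exact Or.inr (mul_right_cancel₀ (mul_ne_zero h0 ha) hpt)

end Coleman

open Coleman in
/-- **Coleman's theorem:** for a fermionic pure state on `Λ^N ℂ^d`, the one-body reduced
density matrix satisfies `S(γ_1) ≥ log N`, with equality for Slater determinants. -/
theorem coleman (d N : ℕ) (hN : 1 ≤ N) (hNd : N ≤ d)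
    (ψ : (Fin N → Fin d) → ℂ) (hanti : IsAntisym d N ψ)
    (hunit : ∑ x : Fin N → Fin d, ‖ψ x‖ ^ 2 = 1) :
    Real.log (N : ℝ) ≤ entropy (ptrace 1 (pureState ψ)) ∧
    ∀ φ : Fin N → EuclideanSpace ℂ (Fin d), Orthonormal ℂ φ →
      entropy (ptrace 1 (pureState (slater d N φ))) = Real.log (N : ℝ) := by
  obtain ⟨M, rfl⟩ : ∃ M, N = M + 1 := ⟨N - 1, by omega⟩
  constructor
  · -- Part 1: the Coleman bound
    have hγ : (ptrace 1 (pureState ψ)).IsHermitian := gamma_isHermitian ψ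
    have hunit' : ∑ x, Complex.normSq (ψ x) = 1 := by
      rw [← hunit]
      exact Finset.sum_congr rfl fun x _ => by
        rw [← Complex.sq_norm]
    have heig : ∀ i : Fin 1 → Fin d,
        0 ≤ hγ.eigenvalues i ∧ ((M : ℝ) + 1) * hγ.eigenvalues i ≤ 1 := by
      intro i
      have hn := hγ.eigenvectorBasis.orthonormal.1 i
      rw [EuclideanSpace.norm_eq] at hn
      have h0 : (0:ℝ) ≤ ∑ a : Fin 1 → Fin d, ‖hγ.eigenvectorBasis i a‖ ^ 2 :=
        Finset.sum_nonneg fun a _ => sq_nonneg _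
      have hS : ∑ a : Fin 1 → Fin d, ‖hγ.eigenvectorBasis i a‖ ^ 2 = 1 := by
        nlinarith [Real.sq_sqrt h0, hn]
      have hv1 : ∑ a : Fin 1 → Fin d, Complex.normSq (hγ.eigenvectorBasis i a) = 1 := by
        rw [← hS]
        refine Finset.sum_congr rfl fun a _ => ?_
        rw [← Complex.sq_norm]
      have hf1 : ∑ w : Fin d, Complex.normSq (hγ.eigenvectorBasis i (fun _ => w)) = 1 := by
        rw [← hv1]
        exact Equiv.sum_comp (Equiv.funUnique (Fin 1) (Fin d)).symm
          (fun a : Fin 1 → Fin d => Complex.normSq (hγ.eigenvectorBasis i a))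
      have he := hγ.eigenvalues_eq i
      rw [gamma_quadform ψ ⇑(hγ.eigenvectorBasis i), RCLike.re_to_complex,
        Complex.ofReal_re] at he
      refine ⟨?_, ?_⟩
      · rw [he]; exact Finset.sum_nonneg fun z _ => Complex.normSq_nonneg _
      · rw [he]
        exact quadform_bound hanti hunit' (fun w => hγ.eigenvectorBasis i (fun _ => w)) hf1
    have hsum : ∑ i, hγ.eigenvalues i = 1 := by
      have h1 : ((∑ i, hγ.eigenvalues i : ℝ) : ℂ) = ((1 : ℝ) : ℂ) := by
        push_cast
        rw [← trace_eq_sum_eigenvalues hγ, gamma_trace ψ, hunit']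
        norm_num
      exact_mod_cast h1
    have hent : entropy (ptrace 1 (pureState ψ))
        = -∑ i, hγ.eigenvalues i * Real.log (hγ.eigenvalues i) := by
      unfold entropy
      rw [dif_pos hγ]
    rw [hent]
    have hlog : Real.log ((M + 1 : ℕ) : ℝ) = ∑ i : Fin 1 → Fin d,
        hγ.eigenvalues i * Real.log ((M : ℝ) + 1) := by
      rw [← Finset.sum_mul, hsum, one_mul]
      push_cast
      ring_nf
    rw [hlog, ← Finset.sum_neg_distrib]
    refine Finset.sum_le_sum fun i _ => ?_
    obtain ⟨h0, h1⟩ := heig i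
    rcases eq_or_lt_of_le h0 with heq | hpos
    · rw [← heq]; simp
    · have hM1 : (0:ℝ) < (M : ℝ) + 1 := by positivity
      have hle : hγ.eigenvalues i ≤ ((M : ℝ) + 1)⁻¹ := by
        rw [inv_eq_one_div, le_div_iff₀ hM1]
        linarith
      have hlog2 : Real.log (hγ.eigenvalues i) ≤ -Real.log ((M : ℝ) + 1) := by
        rw [← Real.log_inv]
        exact Real.log_le_log hpos hle
      nlinarith [mul_le_mul_of_nonneg_left hlog2 h0]
  · -- Part 2: Slater determinants
    intro φ hφ
    have hA : (ptrace 1 (pureState (slater d (M + 1) φ))).IsHermitian :=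
      gamma_isHermitian _
    have heig : ∀ i : Fin 1 → Fin d, hA.eigenvalues i = 0 ∨
        hA.eigenvalues i = ((M + 1 : ℕ) : ℝ)⁻¹ := by
      intro i
      rcases eigs_dichotomy hA (slater_gamma_sq φ hφ) i with h | h
      · exact Or.inl (by exact_mod_cast h)
      · right
        have h2 : ((hA.eigenvalues i : ℝ) : ℂ) = ((((M + 1 : ℕ) : ℝ)⁻¹ : ℝ) : ℂ) := by
          rw [h]; push_cast; ring
        exact_mod_cast h2
    have hsum : ∑ i, hA.eigenvalues i = 1 := by
      have h1 : ((∑ i, hA.eigenvalues i : ℝ) : ℂ) = ((1 : ℝ) : ℂ) := by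
        push_cast
        rw [← trace_eq_sum_eigenvalues hA, slater_gamma_trace φ hφ]
      exact_mod_cast h1
    unfold entropy
    rw [dif_pos hA]
    have hterm : ∀ i : Fin 1 → Fin d, hA.eigenvalues i * Real.log (hA.eigenvalues i)
        = hA.eigenvalues i * Real.log (((M + 1 : ℕ) : ℝ)⁻¹) := by
      intro i
      rcases heig i with h | h
      · rw [h, zero_mul, zero_mul]
      · rw [h]
    rw [Finset.sum_congr rfl fun i _ => hterm i, ← Finset.sum_mul, hsum, one_mul,
      Real.log_inv, neg_neg]

end
end Fermionic
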